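/- For m = 3 and ε the signature (determinant) form on K³, the Hopf algebra H(ε) is not commutative. Specifically, there is an algebra homomorphism from H(ε) to the free algebra K⟨x,y⟩ sending the matrix (u^μ_ν) to the upper triangular matrix with rows (1,x,y),(0,1,0),(0,0,1) and (s^μ_ν) to the matrix with rows (1,-x,-y),(0,1,0),(0,0,1); since x and y do not commute in K⟨x,y⟩ and lie in the image, H(ε) is not commutative. -/

import Mathlib

namespace Stmt18

/-- Free algebra on the generators `u^μ_ν`, `s^μ_ν` (`μ, ν ∈ {1,2,3}`). -/
abbrev FA (K : Type*) [Field K] :=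
  FreeAlgebra K ((Fin 3 × Fin 3) ⊕ (Fin 3 × Fin 3))

def Ug (K : Type*) [Field K] (μ ν : Fin 3) : FA K :=
  FreeAlgebra.ι K (Sum.inl (μ, ν))

def Sg (K : Type*) [Field K] (μ ν : Fin 3) : FA K :=
  FreeAlgebra.ι K (Sum.inr (μ, ν))

/-- The Levi-Civita components `ε_{λ₁λ₂λ₃}`. -/
def eps (K : Type*) [Field K] (ι : Fin 3 → Fin 3) : K :=
  (Matrix.of fun i j : Fin 3 => if ι i = j then (1 : K) else 0).det

/-- The defining relations of `H(ε)` (with twisting element `Q = Id`):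
`Σ_λ u^μ_λ s^λ_ν = δ^μ_ν`, `Σ_ρ u^ρ_ν s^μ_ρ = δ^μ_ν`, and
`Σ ε_{λ₁λ₂λ₃} u^{λ₁}_{μ₁} u^{λ₂}_{μ₂} u^{λ₃}_{μ₃} = ε_{μ₁μ₂μ₃}·1`. -/
inductive HepsRel (K : Type*) [Field K] : FA K → FA K → Prop
  | us (μ ν : Fin 3) :
      HepsRel K (∑ lam : Fin 3, Ug K μ lam * Sg K lam ν) (if μ = ν then 1 else 0)
  | tus (μ ν : Fin 3) :
      HepsRel K (∑ ρ : Fin 3, Ug K ρ ν * Sg K μ ρ) (if μ = ν then 1 else 0)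
  | invw (μs : Fin 3 → Fin 3) :
      HepsRel K
        (∑ ls : Fin 3 → Fin 3,
          eps K ls • (Ug K (ls 0) (μs 0) * Ug K (ls 1) (μs 1) * Ug K (ls 2) (μs 2)))
        (algebraMap K (FA K) (eps K μs))

/-- The Hopf algebra `H(ε)` of the signature form on `K³`. -/
abbrev Heps (K : Type*) [Field K] := RingQuot (HepsRel K)

def uu (K : Type*) [Field K] (μ ν : Fin 3) : Heps K :=
  RingQuot.mkAlgHom K (HepsRel K) (Ug K μ ν)

def ss (K : Type*) [Field K] (μ ν : Fin 3) : Heps K :=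
  RingQuot.mkAlgHom K (HepsRel K) (Sg K μ ν)


/-! ### Auxiliary definitions and lemmas -/

def Umat (K : Type*) [Field K] : Matrix (Fin 3) (Fin 3) (FreeAlgebra K (Fin 2)) :=
  ![![1, FreeAlgebra.ι K 0, FreeAlgebra.ι K 1], ![0, 1, 0], ![0, 0, 1]]

def Smat (K : Type*) [Field K] : Matrix (Fin 3) (Fin 3) (FreeAlgebra K (Fin 2)) :=
  ![![1, -FreeAlgebra.ι K 0, -FreeAlgebra.ι K 1], ![0, 1, 0], ![0, 0, 1]]

noncomputable def F (K : Type*) [Field K] : FA K →ₐ[K] FreeAlgebra K (Fin 2) :=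
  FreeAlgebra.lift K (fun g => match g with
    | .inl (μ, ν) => Umat K μ ν
    | .inr (μ, ν) => Smat K μ ν)

lemma F_U (K : Type*) [Field K] (μ ν : Fin 3) : F K (Ug K μ ν) = Umat K μ ν := by
  simp [F, Ug]

lemma F_S (K : Type*) [Field K] (μ ν : Fin 3) : F K (Sg K μ ν) = Smat K μ ν := by
  simp [F, Sg]

def e3 : (Fin 3 → Fin 3) ≃ Fin 3 × Fin 3 × Fin 3 where
  toFun ls := (ls 0, ls 1, ls 2)
  invFun p := ![p.1, p.2.1, p.2.2]
  left_inv ls := by funext i; fin_cases i <;> rfl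
  right_inv p := rfl

lemma sum_fn3 {A : Type*} [AddCommMonoid A] (f : (Fin 3 → Fin 3) → A) :
    ∑ ls : Fin 3 → Fin 3, f ls = ∑ a : Fin 3, ∑ b : Fin 3, ∑ c : Fin 3, f ![a, b, c] := by
  rw [← Fintype.sum_equiv e3.symm (fun p => f (e3.symm p)) f (fun p => rfl)]
  simp only [Fintype.sum_prod_type]
  rfl

def levi : Fin 3 → Fin 3 → Fin 3 → ℤ
  | 0, 1, 2 => 1
  | 1, 2, 0 => 1
  | 2, 0, 1 => 1
  | 0, 2, 1 => -1
  | 2, 1, 0 => -1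
  | 1, 0, 2 => -1
  | _, _, _ => 0

lemma eps_val (K : Type*) [Field K] (a b c : Fin 3) :
    eps K ![a, b, c] = ((levi a b c : ℤ) : K) := by
  fin_cases a <;> fin_cases b <;> fin_cases c <;>
    simp [eps, Matrix.det_fin_three, levi]

set_option maxHeartbeats 1000000 in
lemma Frel (K : Type*) [Field K] : ∀ ⦃a b : FA K⦄, HepsRel K a b → F K a = F K b := by
  intro a b h
  induction h with
  | us μ ν =>
      simp only [map_sum, map_mul, F_U, F_S]
      fin_cases μ <;> fin_cases ν <;>
        simp [Fin.sum_univ_three, Umat, Smat, Matrix.vecHead, Matrix.vecTail]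
  | tus μ ν =>
      simp only [map_sum, map_mul, F_U, F_S]
      fin_cases μ <;> fin_cases ν <;>
        simp [Fin.sum_univ_three, Umat, Smat, Matrix.vecHead, Matrix.vecTail]
  | invw μs =>
      have hμ : μs = ![μs 0, μs 1, μs 2] := by funext i; fin_cases i <;> rfl
      rw [hμ]
      generalize μs 0 = a; generalize μs 1 = b; generalize μs 2 = c
      simp only [map_sum, map_smul, map_mul, F_U]
      rw [sum_fn3 (fun ls => eps K ls • (Umat K (ls 0) (![a,b,c] 0) *
        Umat K (ls 1) (![a,b,c] 1) * Umat K (ls 2) (![a,b,c] 2)))]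
      simp only [Fin.sum_univ_three, eps_val, Matrix.cons_val_zero, Matrix.cons_val_one,
        Matrix.head_cons, Matrix.cons_val_two, Matrix.tail_cons]
      fin_cases a <;> fin_cases b <;> fin_cases c <;>
        · simp [levi, Umat, Matrix.vecHead, Matrix.vecTail, zero_smul, one_smul, neg_smul]
          try noncomm_ring

lemma xy_ne (K : Type*) [Field K] :
    (FreeAlgebra.ι K (0 : Fin 2)) * FreeAlgebra.ι K 1 ≠ FreeAlgebra.ι K 1 * FreeAlgebra.ι K 0 := by
  intro h
  apply_fun FreeAlgebra.equivMonoidAlgebraFreeMonoid at h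
  have key : ∀ i : Fin 2, FreeAlgebra.equivMonoidAlgebraFreeMonoid (FreeAlgebra.ι K i)
      = MonoidAlgebra.single (FreeMonoid.of i) 1 := fun i => by
    simp [FreeAlgebra.equivMonoidAlgebraFreeMonoid, MonoidAlgebra.of_apply]
  simp only [map_mul, key, MonoidAlgebra.single_mul_single, one_mul] at h
  rcases MonoidAlgebra.single_inj.mp h with ⟨h1, _⟩ | ⟨h1, _⟩
  · have : ([0, 1] : List (Fin 2)) = [1, 0] := h1
    simp at this
  · exact one_ne_zero h1

/-- Proposition 7.2: for `m = 3` the Hopf algebra `H(ε)` of the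
determinant form on `K³` is not commutative: there is an algebra homomorphism
`H(ε) → K⟨x,y⟩` sending `(u^μ_ν)` to `[[1,x,y],[0,1,0],[0,0,1]]` and `(s^μ_ν)` to
`[[1,-x,-y],[0,1,0],[0,0,1]]`, and its image contains the noncommuting `x`, `y`. -/
theorem stmt_18 {K : Type*} [Field K] :
    (∃ φ : Heps K →ₐ[K] FreeAlgebra K (Fin 2),
      (∀ μ ν : Fin 3,
        φ (uu K μ ν) =
          ![![1, FreeAlgebra.ι K 0, FreeAlgebra.ι K 1],
            ![0, 1, 0], ![0, 0, 1]] μ ν) ∧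
      (∀ μ ν : Fin 3,
        φ (ss K μ ν) =
          ![![1, -FreeAlgebra.ι K 0, -FreeAlgebra.ι K 1],
            ![0, 1, 0], ![0, 0, 1]] μ ν)) ∧
    ¬ (∀ a b : Heps K, a * b = b * a) := by
  set φ : Heps K →ₐ[K] FreeAlgebra K (Fin 2) :=
    RingQuot.liftAlgHom K ⟨F K, Frel K⟩ with hφ
  have hU : ∀ μ ν : Fin 3, φ (uu K μ ν) = Umat K μ ν := fun μ ν => by
    rw [hφ, uu, RingQuot.liftAlgHom_mkAlgHom_apply, F_U]
  have hS : ∀ μ ν : Fin 3, φ (ss K μ ν) = Smat K μ ν := fun μ ν => by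
    rw [hφ, ss, RingQuot.liftAlgHom_mkAlgHom_apply, F_S]
  refine ⟨⟨φ, hU, hS⟩, fun hcomm => ?_⟩
  have h := congrArg φ (hcomm (uu K 0 1) (uu K 0 2))
  simp only [map_mul, hU] at h
  exact xy_ne K (by simpa [Umat] using h)

end Stmt18
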